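/- Let H be a Hilbert space, f : [a,b] → H Bochner integrable, K ≥ 1, and e a unit vector in H with ‖f(t)‖ ≤ K · Re⟨f(t), e⟩ for a.e. t. Then equality ∫ₐᵇ ‖f(t)‖ dt = K‖∫ₐᵇ f(t) dt‖ holds if and only if ∫ₐᵇ f(t) dt = (1/K)(∫ₐᵇ ‖f(t)‖ dt) · e. -/

import Mathlib

open MeasureTheory

theorem stmt_1 {𝕜 H : Type*} [RCLike 𝕜] [NormedAddCommGroup H] [InnerProductSpace 𝕜 H]
    [NormedSpace ℝ H] [IsScalarTower ℝ 𝕜 H] [CompleteSpace H]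
    {a b : ℝ} {f : ℝ → H} (hf : IntegrableOn f (Set.Icc a b))
    {K : ℝ} (hK : 1 ≤ K) {e : H} (he : ‖e‖ = 1)
    (h : ∀ᵐ t ∂(volume.restrict (Set.Icc a b)),
      ‖f t‖ ≤ K * RCLike.re (inner 𝕜 (f t) e : 𝕜)) :
    (∫ t in Set.Icc a b, ‖f t‖) = K * ‖∫ t in Set.Icc a b, f t‖ ↔
      (∫ t in Set.Icc a b, f t) = ((1 / K) * ∫ t in Set.Icc a b, ‖f t‖) • e := by
  set μ := volume.restrict (Set.Icc a b)
  set I := ∫ t in Set.Icc a b, f t with hI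
  set N := ∫ t in Set.Icc a b, ‖f t‖ with hNdef
  have hK0 : (0:ℝ) < K := lt_of_lt_of_le one_pos hK
  have hN0 : 0 ≤ N := integral_nonneg fun t => norm_nonneg _
  have hinner : Integrable (fun t => (inner 𝕜 e (f t) : 𝕜)) μ := hf.const_inner e
  have hre : ∫ t, RCLike.re (inner 𝕜 e (f t) : 𝕜) ∂μ = RCLike.re (inner 𝕜 e I : 𝕜) := by
    rw [integral_re hinner, integral_inner hf]
  have hsymm : ∀ x : H, RCLike.re (inner 𝕜 x e : 𝕜) = RCLike.re (inner 𝕜 e x : 𝕜) := fun x =>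
    inner_re_symm (𝕜 := 𝕜) x e
  have hNle : N ≤ K * RCLike.re (inner 𝕜 e I : 𝕜) := by
    have : N ≤ ∫ t, K * RCLike.re (inner 𝕜 e (f t) : 𝕜) ∂μ := by
      refine integral_mono_ae hf.norm ((MeasureTheory.Integrable.re hinner).const_mul K) ?_
      filter_upwards [h] with t ht
      simpa [hsymm] using ht
    rwa [integral_const_mul, hre] at this
  constructor
  · intro heq
    have hle : RCLike.re (inner 𝕜 e I : 𝕜) ≤ ‖I‖ := by
      calc RCLike.re (inner 𝕜 e I : 𝕜) ≤ ‖e‖ * ‖I‖ := re_inner_le_norm e I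
        _ = ‖I‖ := by rw [he, one_mul]
    have hge : ‖I‖ ≤ RCLike.re (inner 𝕜 e I : 𝕜) := by
      rw [heq] at hNle
      exact le_of_mul_le_mul_left hNle hK0
    have hre2 : RCLike.re (inner 𝕜 e I : 𝕜) = ‖I‖ := le_antisymm hle hge
    have hzero : I - ‖I‖ • e = 0 := by
      have hnsq : ‖I - ‖I‖ • e‖ ^ 2 = 0 := by
        rw [@norm_sub_sq 𝕜]
        have hsm : RCLike.re (inner 𝕜 I (‖I‖ • e) : 𝕜) = ‖I‖ * RCLike.re (inner 𝕜 I e : 𝕜) := by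
          rw [RCLike.real_smul_eq_coe_smul (K := 𝕜), inner_smul_right, RCLike.re_ofReal_mul]
        rw [hsm, norm_smul, he, hsymm, hre2]
        simp [Real.norm_eq_abs, abs_of_nonneg (norm_nonneg I)]
        ring
      have := pow_eq_zero_iff (n := 2) (by norm_num) |>.mp hnsq
      exact norm_eq_zero.mp this
    have hIe : I = ‖I‖ • e := by rwa [sub_eq_zero] at hzero
    have hnorm : ‖I‖ = (1/K) * N := by
      rw [heq]; field_simp
    rw [hIe, hnorm]
  · intro heq
    have : ‖I‖ = (1/K) * N := by
      rw [heq, norm_smul, he, mul_one, Real.norm_eq_abs,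
        abs_of_nonneg (by positivity)]
    rw [this]; field_simp
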